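/- arXiv:1404.3791 — 5 statements merged into one kernel-verified Lean document; each statement's English description precedes it below -/
import Mathlib

section
/- Let M be a totally umbilical submanifold tangent to ξ of a Kenmotsu manifold with mean curvature vector H. Then g(X, ξ)H = 0 for all X tangent to M; in particular, η(X)·H = 0, so H = 0 (i.e., M is totally geodesic) whenever some tangent X has η(X) ≠ 0 acting pointwise. -/
open Real

section Preamble

variable (C V : Type*) [CommRing C] [Algebra ℝ C] [AddCommGroup V] [Module C V]

/-- An almost contact metric structure `(g, φ, ξ, η)` on the module `V` of vector fields
of the ambient manifold, with scalar functions valued in the `ℝ`-algebra `C`. -/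
structure ACMS where
  g : V → V → C
  phi : V → V
  xi : V
  eta : V → C
  g_symm : ∀ X Y, g X Y = g Y X
  g_addl : ∀ X Y Z, g (X + Y) Z = g X Z + g Y Z
  g_smull : ∀ (a : C) (X Y : V), g (a • X) Y = a * g X Y
  g_nondeg : ∀ X, (∀ Y, g X Y = 0) → X = 0
  phi_add : ∀ X Y, phi (X + Y) = phi X + phi Y
  phi_smul : ∀ (a : C) (X : V), phi (a • X) = a • phi X
  phi_sq : ∀ X, phi (phi X) = -X + eta X • xi
  eta_xi : eta xi = 1
  phi_xi : phi xi = 0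
  eta_phi : ∀ X, eta (phi X) = 0
  g_phiphi : ∀ X Y, g (phi X) (phi Y) = g X Y - eta X * eta Y
  eta_def : ∀ X, eta X = g X xi

/-- A Kenmotsu manifold: an almost contact metric structure together with its Levi-Civita
connection `nab` (with directional derivative `D` on functions) satisfying
`(∇̄_X φ)Y = g(φX, Y)ξ - η(Y)φX` and `∇̄_X ξ = X - η(X)ξ`. -/
structure Kenmotsu extends ACMS C V where
  nab : V → V → V
  D : V → C → C
  compat : ∀ X Y Z, D X (g Y Z) = g (nab X Y) Z + g Y (nab X Z)
  kphi : ∀ X Y, nab X (phi Y) = phi (nab X Y) + g (phi X) Y • xi - eta Y • phi X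
  kxi : ∀ X, nab X xi = X - eta X • xi

variable {C V}

/-- A submanifold tangent to `ξ`: a submodule `TM` of tangent vector fields together with
the tangential/normal projections `tang`, `nor`. -/
structure Subm (S : ACMS C V) where
  TM : Submodule C V
  tang : V → V
  nor : V → V
  tang_mem : ∀ v, tang v ∈ TM
  decomp : ∀ v, tang v + nor v = v
  nor_orth : ∀ v, ∀ w ∈ TM, S.g (nor v) w = 0
  tang_of_mem : ∀ v ∈ TM, tang v = v
  xi_mem : S.xi ∈ TM

namespace Subm
variable {S : ACMS C V}

/-- The tangential part `T` of `φ`. -/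
def T (M : Subm S) : V → V := fun X => M.tang (S.phi X)

/-- The normal part `F` of `φ`. -/
def F (M : Subm S) : V → V := fun X => M.nor (S.phi X)

/-- `M` is slant with Wirtinger angle `θ`: for every tangent `X` not proportional to `ξ`,
the angle between `φX` and `TM` is `θ`, i.e. `‖TX‖² = cos²θ ‖φX‖²`. -/
def IsSlantAngle (M : Subm S) (θ : ℝ) : Prop :=
  θ ∈ Set.Icc 0 (π / 2) ∧ ∀ X ∈ M.TM, X ∉ Submodule.span C {S.xi} →
    S.g (M.T X) (M.T X) = algebraMap ℝ C ((Real.cos θ) ^ 2) * S.g (S.phi X) (S.phi X)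

/-- Slant via the characterization `T² = cos²θ(-I + η ⊗ ξ)` on `TM`. -/
def SlantT2 (M : Subm S) (θ : ℝ) : Prop :=
  ∀ X ∈ M.TM, M.T (M.T X) = algebraMap ℝ C ((Real.cos θ) ^ 2) • (-X + S.eta X • S.xi)

end Subm

/-- A submanifold of a Kenmotsu manifold with its induced connection `nabM`, second
fundamental form `h2`, shape operator `A` and normal connection `nabp`, satisfying the
Gauss and Weingarten formulas. -/
structure SubmK (K : Kenmotsu C V) extends Subm K.toACMS where
  nabM : V → V → V
  h2 : V → V → V
  A : V → V → V
  nabp : V → V → V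
  gauss : ∀ X ∈ TM, ∀ Y ∈ TM, K.nab X Y = nabM X Y + h2 X Y
  nabM_mem : ∀ X ∈ TM, ∀ Y ∈ TM, nabM X Y ∈ TM
  h2_nor : ∀ X ∈ TM, ∀ Y ∈ TM, ∀ w ∈ TM, K.g (h2 X Y) w = 0
  h2_symm : ∀ X Y, h2 X Y = h2 Y X
  wein : ∀ X ∈ TM, ∀ N : V, (∀ w ∈ TM, K.g N w = 0) → K.nab X N = -A N X + nabp X N
  A_mem : ∀ (N : V), ∀ X ∈ TM, A N X ∈ TM
  nabp_nor : ∀ X ∈ TM, ∀ N : V, (∀ w ∈ TM, K.g N w = 0) → ∀ w ∈ TM, K.g (nabp X N) w = 0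
  shape_rel : ∀ X ∈ TM, ∀ Y ∈ TM, ∀ N : V, K.g (h2 X Y) N = K.g (A N X) Y

namespace SubmK
variable {K : Kenmotsu C V}

/-- The tangential part `T` of `φ` (also the operator `t` on normal fields). -/
def T (M : SubmK K) : V → V := fun X => M.tang (K.phi X)

/-- The normal part `F` of `φ` (also the operator `f` on normal fields). -/
def F (M : SubmK K) : V → V := fun X => M.nor (K.phi X)

/-- Slant via the characterization `T² = cos²θ(-I + η ⊗ ξ)` on `TM`. -/
def SlantT2 (M : SubmK K) (θ : ℝ) : Prop :=
  ∀ X ∈ M.TM, M.T (M.T X) = algebraMap ℝ C ((Real.cos θ) ^ 2) • (-X + K.eta X • K.xi)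

/-- `M` is totally umbilical with (normal) mean curvature vector `H`:
`h(X, Y) = g(X, Y) H`. -/
def TotUmb (M : SubmK K) (H : V) : Prop :=
  (∀ w ∈ M.TM, K.g H w = 0) ∧ ∀ X ∈ M.TM, ∀ Y ∈ M.TM, M.h2 X Y = K.g X Y • H

/-- `H` lies in the `φ`-invariant normal subbundle `μ`, the orthogonal complement of
`F(TM)` in the normal bundle (so `H` and `φH` are normal and orthogonal to `F(TM)`). -/
def InMu (M : SubmK K) (H : V) : Prop :=
  (∀ w ∈ M.TM, K.g H w = 0) ∧ (∀ X ∈ M.TM, K.g H (M.F X) = 0) ∧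
  (∀ w ∈ M.TM, K.g (K.phi H) w = 0) ∧ (∀ X ∈ M.TM, K.g (K.phi H) (M.F X) = 0)

end SubmK

end Preamble

/-- for a totally umbilical submanifold tangent to `ξ` of a Kenmotsu
manifold, `g(X, ξ) H = 0` for all tangent `X`; in particular `H = 0` (`M` is totally
geodesic) whenever some tangent `X` has `η(X) ≠ 0`. -/
theorem stmt6 {C V : Type*} [CommRing C] [Algebra ℝ C] [AddCommGroup V] [Module C V] (K : Kenmotsu C V) (M : SubmK K) (H : V)
    (humb : M.TotUmb H) :
    (∀ X ∈ M.TM, K.g X K.xi • H = 0) ∧ ((∃ X ∈ M.TM, K.eta X ≠ 0) → H = 0) := by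
  have key : ∀ X ∈ M.TM, K.g X K.xi • H = 0 := by
    intro X hX
    have hg := M.gauss X hX K.xi M.xi_mem
    have hk := K.kxi X
    have heq : M.h2 X K.xi = X - K.eta X • K.xi - M.nabM X K.xi := by
      rw [hk] at hg
      rw [hg]; abel
    have hmem : M.h2 X K.xi ∈ M.TM := by
      rw [heq]
      exact Submodule.sub_mem _ (Submodule.sub_mem _ hX (Submodule.smul_mem _ _ M.xi_mem))
        (M.nabM_mem X hX K.xi M.xi_mem)
    have hzero : M.h2 X K.xi = 0 := by
      apply K.g_nondeg
      intro Y
      have hY := M.decomp Y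
      have h1 : K.g (M.h2 X K.xi) (M.tang Y) = 0 :=
        M.h2_nor X hX K.xi M.xi_mem (M.tang Y) (M.tang_mem Y)
      have h2 : K.g (M.h2 X K.xi) (M.nor Y) = 0 := by
        rw [K.g_symm]; exact M.nor_orth Y _ hmem
      calc K.g (M.h2 X K.xi) Y = K.g Y (M.h2 X K.xi) := K.g_symm _ _
        _ = K.g (M.tang Y + M.nor Y) (M.h2 X K.xi) := by rw [hY]
        _ = K.g (M.tang Y) (M.h2 X K.xi) + K.g (M.nor Y) (M.h2 X K.xi) := K.g_addl _ _ _
        _ = 0 := by rw [K.g_symm (M.tang Y), h1, K.g_symm (M.nor Y), h2, add_zero]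
    have := humb.2 X hX K.xi M.xi_mem
    rw [hzero] at this
    exact this.symm
  refine ⟨key, fun _ => ?_⟩
  have h := key K.xi M.xi_mem
  rwa [← K.eta_def, K.eta_xi, one_smul] at h
end

section
/- Let M be a slant submanifold with slant angle θ of an almost contact metric manifold, with ξ tangent to M. Then T² = cos²θ·(-I + η⊗ξ), where T is the tangential part of φ restricted to TM. -/
open Real

/-- a slant submanifold with slant angle `θ` satisfies
`T² = cos²θ (-I + η ⊗ ξ)`. -/
theorem stmt7 {C V : Type*} [CommRing C] [Algebra ℝ C] [AddCommGroup V] [Module C V] (S : ACMS C V) (M : Subm S) (θ : ℝ)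
    (hslant : M.IsSlantAngle θ) :
    M.SlantT2 θ := by
  obtain ⟨-, hsl⟩ := hslant
  set c : C := algebraMap ℝ C ((Real.cos θ) ^ 2) with hc
  -- basic metric lemmas
  have gaddr : ∀ X Y Z : V, S.g X (Y + Z) = S.g X Y + S.g X Z := fun X Y Z => by
    rw [S.g_symm, S.g_addl, S.g_symm Y, S.g_symm Z]
  have gsmulr : ∀ (a : C) (X Y : V), S.g X (a • Y) = a * S.g X Y := fun a X Y => by
    rw [S.g_symm, S.g_smull, S.g_symm]
  have gzeror : ∀ X : V, S.g X 0 = 0 := fun X => by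
    have h := gsmulr 0 X 0; simpa using h
  have gzerol : ∀ X : V, S.g 0 X = 0 := fun X => by rw [S.g_symm]; exact gzeror X
  have gnegr : ∀ X Y : V, S.g X (-Y) = - S.g X Y := fun X Y => by
    have h := gsmulr (-1) X Y; simpa using h
  have gnegl : ∀ X Y : V, S.g (-X) Y = - S.g X Y := fun X Y => by
    rw [S.g_symm, gnegr, S.g_symm]
  have etag : ∀ X : V, S.g X S.xi = S.eta X := fun X => (S.eta_def X).symm
  have etaadd : ∀ X Y : V, S.eta (X + Y) = S.eta X + S.eta Y := fun X Y => by
    rw [S.eta_def, S.g_addl, etag, etag]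
  -- skew-symmetry of phi
  have skew : ∀ X Y : V, S.g (S.phi X) Y = - S.g X (S.phi Y) := by
    intro X Y
    have h1 := S.g_phiphi X (S.phi Y)
    rw [S.phi_sq Y, S.eta_phi, gaddr, gnegr, gsmulr, etag, S.eta_phi] at h1
    linear_combination -h1
  have gn : ∀ v : V, ∀ Y ∈ M.TM, S.g Y (M.nor v) = 0 := fun v Y hY => by
    rw [S.g_symm]; exact M.nor_orth v Y hY
  have split : ∀ v : V, ∀ Y ∈ M.TM, S.g (S.phi v) Y = S.g (M.T v) Y := by
    intro v Y hY
    show S.g (S.phi v) Y = S.g (M.tang (S.phi v)) Y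
    conv_lhs => rw [← M.decomp (S.phi v)]
    rw [S.g_addl, M.nor_orth _ Y hY, add_zero]
  have split2 : ∀ v : V, ∀ Y ∈ M.TM, S.g Y (S.phi v) = S.g Y (M.T v) := by
    intro v Y hY
    rw [S.g_symm, split v Y hY, S.g_symm]
  have hTmem : ∀ v : V, M.T v ∈ M.TM := fun v => M.tang_mem (S.phi v)
  -- key identity: g(TX, TY) = -g(T²X, Y) for Y tangent
  have key : ∀ (X : V), ∀ Y ∈ M.TM, S.g (M.T X) (M.T Y) = - S.g (M.T (M.T X)) Y := by
    intro X Y hY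
    calc S.g (M.T X) (M.T Y) = S.g (M.T X) (S.phi Y) := (split2 Y (M.T X) (hTmem X)).symm
      _ = - S.g (S.phi (M.T X)) Y := by linear_combination skew (M.T X) Y
      _ = - S.g (M.T (M.T X)) Y := by rw [split (M.T X) Y hY]
  -- diagonal of the slant bilinear form
  have Ediag : ∀ X ∈ M.TM, S.g (M.T X) (M.T X) = c * (S.g X X - S.eta X * S.eta X) := by
    intro X hX
    by_cases hsp : X ∈ Submodule.span C {S.xi}
    · obtain ⟨a, rfl⟩ := Submodule.mem_span_singleton.mp hsp
      have hT : M.T (a • S.xi) = 0 := by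
        show M.tang (S.phi (a • S.xi)) = 0
        rw [S.phi_smul, S.phi_xi, smul_zero]
        exact M.tang_of_mem 0 (Submodule.zero_mem _)
      have heta : S.eta (a • S.xi) = a := by
        rw [S.eta_def, S.g_smull, etag, S.eta_xi, mul_one]
      have hgg : S.g (a • S.xi) (a • S.xi) = a * a := by
        rw [S.g_smull, gsmulr, etag, S.eta_xi]; ring
      rw [hT, gzerol, heta, hgg]; ring
    · rw [hsl X hX hsp, S.g_phiphi]
  -- polarization: the mixed version
  have Emix : ∀ X ∈ M.TM, ∀ Y ∈ M.TM,
      S.g (M.T X) (M.T Y) = c * (S.g X Y - S.eta X * S.eta Y) := by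
    intro X hX Y hY
    have hXY : X + Y ∈ M.TM := Submodule.add_mem _ hX hY
    have e1 := Ediag X hX
    have e2 := Ediag Y hY
    have e3 := Ediag (X + Y) hXY
    -- expand lhs of e3
    have lhs3 : S.g (M.T (X + Y)) (M.T (X + Y)) =
        S.g (M.T X) (M.T X) + S.g (M.T X) (M.T Y) + S.g (M.T Y) (M.T X)
          + S.g (M.T Y) (M.T Y) := by
      calc S.g (M.T (X + Y)) (M.T (X + Y))
          = - S.g (M.T (M.T (X + Y))) (X + Y) := key (X + Y) (X + Y) hXY
        _ = - S.g (M.T (M.T (X + Y))) X - S.g (M.T (M.T (X + Y))) Y := by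
            rw [gaddr]; ring
        _ = S.g (M.T (X + Y)) (M.T X) + S.g (M.T (X + Y)) (M.T Y) := by
            rw [key (X + Y) X hX, key (X + Y) Y hY]; ring
        _ = S.g (M.T X) (M.T (X + Y)) + S.g (M.T Y) (M.T (X + Y)) := by
            rw [S.g_symm (M.T (X + Y)) (M.T X), S.g_symm (M.T (X + Y)) (M.T Y)]
        _ = - S.g (M.T (M.T X)) (X + Y) - S.g (M.T (M.T Y)) (X + Y) := by
            rw [key X (X + Y) hXY, key Y (X + Y) hXY]; ring
        _ = - (S.g (M.T (M.T X)) X + S.g (M.T (M.T X)) Y)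
              - (S.g (M.T (M.T Y)) X + S.g (M.T (M.T Y)) Y) := by
            rw [gaddr, gaddr]
        _ = S.g (M.T X) (M.T X) + S.g (M.T X) (M.T Y) + S.g (M.T Y) (M.T X)
              + S.g (M.T Y) (M.T Y) := by
            rw [key X X hX, key X Y hY, key Y X hX, key Y Y hY]; ring
    have rhs3 : S.g (X + Y) (X + Y) = S.g X X + S.g X Y + S.g Y X + S.g Y Y := by
      rw [S.g_addl, gaddr, gaddr]; ring
    rw [lhs3, rhs3, etaadd] at e3
    have hsymT : S.g (M.T Y) (M.T X) = S.g (M.T X) (M.T Y) := S.g_symm _ _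
    have hsymg : S.g Y X = S.g X Y := S.g_symm _ _
    rw [hsymT, hsymg] at e3
    set d : C := S.g (M.T X) (M.T Y) - c * (S.g X Y - S.eta X * S.eta Y) with hd
    have h2 : (2 : ℝ) • d = 0 := by
      rw [two_smul]
      rw [hd]
      linear_combination e3 - e1 - e2
    have hdz : d = 0 := by
      calc d = (2 : ℝ)⁻¹ • ((2 : ℝ) • d) := by rw [smul_smul]; norm_num
        _ = 0 := by rw [h2, smul_zero]
    rw [hd] at hdz
    linear_combination hdz
  -- conclude
  intro X hX
  set W : V := M.T (M.T X) - c • (-X + S.eta X • S.xi) with hW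
  have hWmem : W ∈ M.TM := by
    refine Submodule.sub_mem _ (hTmem (M.T X)) (Submodule.smul_mem _ _ ?_)
    exact Submodule.add_mem _ (Submodule.neg_mem _ hX) (Submodule.smul_mem _ _ M.xi_mem)
  have hWtang : ∀ Y ∈ M.TM, S.g W Y = 0 := by
    intro Y hY
    have h1 : S.g (M.T (M.T X)) Y = - S.g (M.T X) (M.T Y) := by
      linear_combination key X Y hY
    have h2 := Emix X hX Y hY
    have h3 : S.g (c • (-X + S.eta X • S.xi)) Y
        = c * (- S.g X Y + S.eta X * S.eta Y) := by
      rw [S.g_smull, S.g_addl, gnegl, S.g_smull, S.g_symm S.xi Y, etag]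
    rw [hW, sub_eq_add_neg, S.g_addl, ← neg_one_smul C (c • (-X + S.eta X • S.xi)),
      S.g_smull, h3, h1, h2]
    ring
  have hWzero : W = 0 := by
    apply S.g_nondeg
    intro Y
    calc S.g W Y = S.g W (M.tang Y + M.nor Y) := by rw [M.decomp Y]
      _ = S.g W (M.tang Y) + S.g W (M.nor Y) := gaddr _ _ _
      _ = 0 := by rw [hWtang (M.tang Y) (M.tang_mem Y), gn Y W hWmem, add_zero]
  have := sub_eq_zero.mp (hW ▸ hWzero)
  exact this
end

section
/- Let M be a submanifold of an almost contact metric manifold with ξ tangent to M. If there exists a constant λ ∈ [0,1] such that T² = λ(-I + η⊗ξ), then M is a slant submanifold, and its slant angle θ satisfies λ = cos²θ. -/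
open Real

/-- if `T² = λ(-I + η ⊗ ξ)` for a constant `λ ∈ [0,1]`, then `M` is slant
and its slant angle `θ` satisfies `λ = cos²θ`. -/
theorem stmt8 {C V : Type*} [CommRing C] [Algebra ℝ C] [AddCommGroup V] [Module C V] (S : ACMS C V) (M : Subm S) (l : ℝ)
    (hl : l ∈ Set.Icc (0 : ℝ) 1)
    (hT2 : ∀ X ∈ M.TM, M.T (M.T X) = algebraMap ℝ C l • (-X + S.eta X • S.xi)) :
    ∃ θ ∈ Set.Icc (0 : ℝ) (π / 2), M.IsSlantAngle θ ∧ l = (Real.cos θ) ^ 2 := by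
  have g_addr : ∀ X Y Z, S.g X (Y + Z) = S.g X Y + S.g X Z := by
    intro X Y Z; rw [S.g_symm, S.g_addl, S.g_symm Y X, S.g_symm Z X]
  have g_smulr : ∀ (a : C) (X Y : V), S.g X (a • Y) = a * S.g X Y := by
    intro a X Y; rw [S.g_symm, S.g_smull, S.g_symm Y X]
  have g_negr : ∀ X Y, S.g X (-Y) = - S.g X Y := by
    intro X Y
    have := g_smulr (-1 : C) X Y
    simpa using this
  have hskew : ∀ X Y, S.g (S.phi X) Y = - S.g X (S.phi Y) := by
    intro X Y
    have h := S.g_phiphi X (S.phi Y)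
    rw [S.phi_sq, S.eta_phi, g_addr, g_negr, g_smulr, ← S.eta_def, S.eta_phi] at h
    simp at h
    linear_combination -h
  have hnor : ∀ v, ∀ w ∈ M.TM, S.g (M.F v) w = 0 := fun v w hw => M.nor_orth (S.phi v) w hw
  -- key identity
  have key : ∀ X ∈ M.TM, S.g (M.T X) (M.T X) = algebraMap ℝ C l * S.g (S.phi X) (S.phi X) := by
    intro X hX
    have hdec : M.T X + M.F X = S.phi X := M.decomp (S.phi X)
    have hTXmem : M.T X ∈ M.TM := M.tang_mem _
    have h1 : S.g (M.T X) (M.T X) = S.g (M.T X) (S.phi X) := by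
      rw [← hdec, g_addr, S.g_symm (M.T X) (M.F X), hnor _ _ hTXmem, add_zero]
    have hdec2 : M.T (M.T X) + M.F (M.T X) = S.phi (M.T X) := M.decomp (S.phi (M.T X))
    have h2 : S.g (S.phi (M.T X)) X = S.g (M.T (M.T X)) X := by
      rw [← hdec2, S.g_addl, hnor _ _ hX, add_zero]
    have h3 : S.g (M.T X) (S.phi X) = - S.g (M.T (M.T X)) X := by
      have := hskew (M.T X) X
      rw [h2] at this
      linear_combination this
    have hnegX : S.g (-X) X = - S.g X X := by
      have := S.g_smull (-1 : C) X X; simpa using this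
    rw [h1, h3, hT2 X hX, S.g_smull, S.g_addl, hnegX, S.g_smull, S.g_symm S.xi X,
      ← S.eta_def, S.g_phiphi]
    ring
  have hl0 := hl.1
  have hl1 := hl.2
  refine ⟨Real.arccos (Real.sqrt l), ⟨Real.arccos_nonneg _, ?_⟩, ⟨⟨⟨Real.arccos_nonneg _, ?_⟩, ?_⟩, ?_⟩⟩
  · exact Real.arccos_le_pi_div_two.mpr (Real.sqrt_nonneg l)
  · exact Real.arccos_le_pi_div_two.mpr (Real.sqrt_nonneg l)
  · intro X hX _
    rw [key X hX]
    congr 2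
    rw [Real.cos_arccos (by linarith [Real.sqrt_nonneg l])
      (Real.sqrt_le_one.mpr hl1), Real.sq_sqrt hl0]
  · rw [Real.cos_arccos (by linarith [Real.sqrt_nonneg l])
      (Real.sqrt_le_one.mpr hl1), Real.sq_sqrt hl0]
end

section
/- Let M be a slant submanifold with slant angle θ of an almost contact metric manifold, ξ tangent to M. Then for all X, Y tangent to M, g(FX, FY) = sin²θ·[g(X, Y) - η(X)η(Y)], where F is the normal component of φ. -/
open Real

/-- on a slant submanifold with angle `θ`,
`g(FX, FY) = sin²θ [g(X, Y) - η(X)η(Y)]`. -/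
theorem stmt10 {C V : Type*} [CommRing C] [Algebra ℝ C] [AddCommGroup V] [Module C V] (S : ACMS C V) (M : Subm S) (θ : ℝ)
    (hslant : M.SlantT2 θ) :
    ∀ X ∈ M.TM, ∀ Y ∈ M.TM,
      S.g (M.F X) (M.F Y) =
        algebraMap ℝ C ((Real.sin θ) ^ 2) * (S.g X Y - S.eta X * S.eta Y) := by
  intro X hX Y hY
  have gneg : ∀ X Y : V, S.g (-X) Y = -(S.g X Y) := by
    intro X Y
    have h := S.g_smull (-1) X Y
    simpa using h
  have gaddr : ∀ X Y Z : V, S.g X (Y + Z) = S.g X Y + S.g X Z := by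
    intro X Y Z
    rw [S.g_symm, S.g_addl, S.g_symm Y, S.g_symm Z]
  have gnegr : ∀ X Y : V, S.g X (-Y) = -(S.g X Y) := by
    intro X Y
    rw [S.g_symm, gneg, S.g_symm]
  have gsmulr : ∀ (a : C) (X Y : V), S.g X (a • Y) = a * S.g X Y := by
    intro a X Y
    rw [S.g_symm, S.g_smull, S.g_symm]
  have getaxi : ∀ Z : V, S.g (S.phi Z) S.xi = 0 := by
    intro Z
    rw [← S.eta_def, S.eta_phi]
  have skew : ∀ X Y : V, S.g X (S.phi Y) = -(S.g (S.phi X) Y) := by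
    intro X Y
    have h := S.g_phiphi X (S.phi Y)
    rw [S.eta_phi, mul_zero, sub_zero, S.phi_sq, gaddr, gnegr, gsmulr, getaxi,
      mul_zero, add_zero] at h
    exact h.symm
  have hdec : ∀ Z : V, S.phi Z = M.T Z + M.F Z := by
    intro Z
    exact (M.decomp (S.phi Z)).symm
  have hFort : ∀ Z : V, ∀ w ∈ M.TM, S.g (M.F Z) w = 0 := fun Z => M.nor_orth _
  have hTmem : ∀ Z : V, M.T Z ∈ M.TM := fun Z => M.tang_mem _
  have h1 : S.g (S.phi X) (S.phi Y) = S.g (M.T X) (M.T Y) + S.g (M.F X) (M.F Y) := by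
    rw [hdec X, hdec Y, S.g_addl, gaddr, gaddr,
      hFort X _ (hTmem Y), S.g_symm (M.T X) (M.F Y), hFort Y _ (hTmem X)]
    ring
  have hTT : S.g (M.T X) (M.T Y)
      = algebraMap ℝ C ((Real.cos θ) ^ 2) * (S.g X Y - S.eta X * S.eta Y) := by
    have e1 : S.g (M.T X) (M.T Y) = S.g (M.T X) (S.phi Y) := by
      rw [hdec Y, gaddr, S.g_symm (M.T X) (M.F Y), hFort Y _ (hTmem X), add_zero]
    rw [e1, skew, hdec (M.T X), S.g_addl, hFort (M.T X) Y hY, add_zero,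
      hslant X hX, S.g_smull, S.g_addl, gneg, S.g_smull, S.g_symm S.xi Y, ← S.eta_def]
    ring
  have h2 := S.g_phiphi X Y
  rw [h1] at h2
  have hsin : algebraMap ℝ C ((Real.sin θ) ^ 2)
      = 1 - algebraMap ℝ C ((Real.cos θ) ^ 2) := by
    rw [← map_one (algebraMap ℝ C), ← map_sub]
    congr 1
    have := Real.sin_sq_add_cos_sq θ
    linarith
  rw [hsin]
  linear_combination h2 - hTT
end

section
/- Let M be a totally umbilical proper slant submanifold of a Kenmotsu manifold with mean curvature vector H lying in the invariant normal subbundle μ. Then for all X, Y tangent to M, g(∇⊥_X FY, φH) = g(X, Y)‖H‖². -/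
open Real

section Aux

set_option linter.unusedSectionVars false

variable {C V : Type*} [CommRing C] [Algebra ℝ C] [AddCommGroup V] [Module C V]

namespace ACMS
variable (S : ACMS C V)

lemma gzl (Y : V) : S.g 0 Y = 0 := by
  have h := S.g_smull 0 0 Y
  simpa using h

lemma gzr (Y : V) : S.g Y 0 = 0 := by rw [S.g_symm]; exact S.gzl Y

lemma gar (X A B : V) : S.g X (A + B) = S.g X A + S.g X B := by
  rw [S.g_symm, S.g_addl, S.g_symm A, S.g_symm B]

lemma gsr (a : C) (X A : V) : S.g X (a • A) = a * S.g X A := by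
  rw [S.g_symm, S.g_smull, S.g_symm]

lemma gnl (A B : V) : S.g (-A) B = - S.g A B := by
  rw [show (-A : V) = (-1 : C) • A by simp, S.g_smull]; ring

lemma gnr (A B : V) : S.g A (-B) = - S.g A B := by
  rw [S.g_symm, S.gnl, S.g_symm]

lemma gsl (A B W : V) : S.g (A - B) W = S.g A W - S.g B W := by
  rw [sub_eq_add_neg, S.g_addl, S.gnl, sub_eq_add_neg]

lemma gsubr (W A B : V) : S.g W (A - B) = S.g W A - S.g W B := by
  rw [S.g_symm, S.gsl, S.g_symm A, S.g_symm B]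

lemma skew (A B : V) : S.g A (S.phi B) = - S.g (S.phi A) B := by
  have h := S.g_phiphi A (S.phi B)
  rw [S.eta_phi, mul_zero, sub_zero] at h
  rw [← h, S.phi_sq, S.gar, S.gnr, S.gsr]
  have : S.g (S.phi A) S.xi = 0 := by rw [← S.eta_def]; exact S.eta_phi A
  rw [this, mul_zero, add_zero]

lemma gHphiH (H : V) : S.g H (S.phi H) = 0 := by
  have hx := S.skew H H
  rw [S.g_symm (S.phi H) H] at hx
  set x := S.g H (S.phi H) with hxdef
  have h2 : x + x = 0 := by nth_rewrite 2 [hx]; exact add_neg_cancel x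
  have half1 : algebraMap ℝ C (1/2) + algebraMap ℝ C (1/2) = 1 := by
    rw [← map_add]; norm_num
  calc x = (algebraMap ℝ C (1/2) + algebraMap ℝ C (1/2)) * x := by rw [half1, one_mul]
    _ = algebraMap ℝ C (1/2) * (x + x) := by ring
    _ = 0 := by rw [h2, mul_zero]

end ACMS

namespace Kenmotsu
variable (K : Kenmotsu C V)

lemma Dzero (X : V) : K.D X 0 = 0 := by
  have h := K.compat X 0 0
  rw [K.toACMS.gzl, K.toACMS.gzr, K.toACMS.gzl, add_zero] at h
  exact h

lemma compat0 (X A B : V) (h : K.g A B = 0) :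
    K.g (K.nab X A) B = - K.g A (K.nab X B) := by
  have hc := K.compat X A B
  rw [h, K.Dzero] at hc
  exact eq_neg_of_add_eq_zero_left hc.symm

end Kenmotsu

end Aux

/-- for a totally umbilical proper slant submanifold with `H ∈ Γ(μ)`,
`g(∇⊥_X FY, φH) = g(X, Y)‖H‖²`. -/
theorem stmt15 {C V : Type*} [CommRing C] [Algebra ℝ C] [AddCommGroup V] [Module C V] (K : Kenmotsu C V) (M : SubmK K) (θ : ℝ) (H : V)
    (hθ : θ ∈ Set.Ioo 0 (π / 2)) (hslant : M.SlantT2 θ) (humb : M.TotUmb H)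
    (hmu : M.InMu H) :
    ∀ X ∈ M.TM, ∀ Y ∈ M.TM,
      K.g (M.nabp X (M.F Y)) (K.phi H) = K.g X Y * K.g H H := by
  obtain ⟨h1, h2, h3, h4⟩ := hmu
  intro X hX Y hY
  have hHxi : K.g H K.xi = 0 := h1 _ M.xi_mem
  have hetaH : K.eta H = 0 := by rw [K.eta_def]; exact hHxi
  have hgphiXH : K.g (K.phi X) H = 0 := by
    have h := K.toACMS.skew X H
    have h0 : K.g X (K.phi H) = 0 := by rw [K.g_symm]; exact h3 X hX
    linear_combination h - h0
  -- (c) : nab X (phi H) = phi (nab X H)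
  have hc : K.nab X (K.phi H) = K.phi (K.nab X H) := by
    rw [K.kphi, hgphiXH, hetaH, zero_smul, zero_smul, add_zero, sub_zero]
  -- eta (nab X H) = 0
  have hetan : K.g (K.nab X H) K.xi = 0 := by
    have h := K.compat0 X H K.xi hHxi
    rw [K.kxi, K.toACMS.gsubr, K.toACMS.gsr, h1 X hX, hHxi, mul_zero, sub_zero,
      neg_zero] at h
    exact h
  -- g Y (nab X H) = -(g X Y * g H H)
  have hYnH : K.g Y (K.nab X H) = -(K.g X Y * K.g H H) := by
    have h0 : K.g Y H = 0 := by rw [K.g_symm]; exact h1 Y hY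
    have h := K.compat0 X Y H h0
    rw [M.gauss X hX Y hY, K.g_addl, K.g_symm (M.nabM X Y),
      h1 _ (M.nabM_mem X hX Y hY), humb.2 X hX Y hY, K.g_smull, zero_add] at h
    linear_combination h
  -- g (T Y) (nab X (phi H)) = 0
  have hTYmem : M.T Y ∈ M.TM := M.tang_mem _
  have hTY : K.g (M.T Y) (K.nab X (K.phi H)) = 0 := by
    have h0 : K.g (M.T Y) (K.phi H) = 0 := by rw [K.g_symm]; exact h3 _ hTYmem
    have h := K.compat0 X (M.T Y) (K.phi H) h0
    rw [M.gauss X hX _ hTYmem, K.g_addl, K.g_symm (M.nabM X (M.T Y)),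
      h3 _ (M.nabM_mem X hX _ hTYmem), humb.2 X hX _ hTYmem, K.g_smull,
      K.toACMS.gHphiH, mul_zero, add_zero] at h
    exact neg_eq_zero.mp h.symm
  -- Weingarten for F Y
  have hFYnor : ∀ w ∈ M.TM, K.g (M.F Y) w = 0 := fun w hw => M.nor_orth _ w hw
  have hwein := M.wein X hX (M.F Y) hFYnor
  have hFYphiH : K.g (M.F Y) (K.phi H) = 0 := by rw [K.g_symm]; exact h4 Y hY
  have hb := K.compat0 X (M.F Y) (K.phi H) hFYphiH
  rw [hwein, K.g_addl, K.toACMS.gnl, K.g_symm (M.A (M.F Y) X),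
    h3 _ (M.A_mem (M.F Y) X hX), neg_zero, zero_add] at hb
  -- F Y = phi Y - T Y
  have hFY : M.F Y = K.phi Y - M.T Y := by
    exact eq_sub_of_add_eq' (M.decomp (K.phi Y))
  rw [hb, hFY, K.toACMS.gsl, hTY, sub_zero, hc, K.g_phiphi,
    K.eta_def (K.nab X H), hetan, mul_zero, sub_zero, hYnH, neg_neg]
end
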